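/- arXiv:2402.01890 — 4 statements merged into one kernel-verified Lean document; each statement's English description precedes it below -/
import Mathlib

section
/- For all n, k ≥ 1, the binomial coefficient C(n+k−1, k) equals the sum, over all partitions ν of k with at most n parts, of the multinomial coefficient n!/(m_1!·m_2!⋯m_q!), where (m_1,…,m_q) = Φ(ν). -/
namespace SP

/-- The multiset of multiplicities of the (distinct) parts of a multiset. -/
def multMultiset (s : Multiset ℕ) : Multiset ℕ := s.dedup.map fun v => s.count v

/-- The map `Φ : Par_k^{≤ n} → Par_n`: multiplicities of the distinct parts of `ν`,
together with `n - ℓ(ν)`, discarding the entry `0` if it occurs. -/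
def phiMultiset (n : ℕ) {k : ℕ} (ν : Nat.Partition k) : Multiset ℕ :=
  (multMultiset ν.parts + {n - ν.parts.card}).filter fun x => x ≠ 0

open Multiset Finset


/-- product of factorials of multiplicities -/
def pfac (s : Multiset ℕ) : ℕ := ∏ v ∈ s.toFinset, (s.count v).factorial

lemma pfac_pos (s : Multiset ℕ) : 0 < pfac s :=
  Finset.prod_pos fun _ _ => Nat.factorial_pos _

lemma pfac_erase {s : Multiset ℕ} {v : ℕ} (hv : v ∈ s) :
    pfac s = s.count v * pfac (s.erase v) := by
  have hsub : (s.erase v).toFinset ⊆ s.toFinset := by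
    intro w hw
    simp only [Multiset.mem_toFinset] at hw ⊢
    exact Multiset.mem_of_mem_erase hw
  have h1 : pfac (s.erase v) = ∏ w ∈ s.toFinset, ((s.erase v).count w).factorial :=
    Finset.prod_subset hsub (by
      intro w _ hw
      simp only [Multiset.mem_toFinset] at hw
      have : (s.erase v).count w = 0 := Multiset.count_eq_zero.2 hw
      simp [this])
  have hvmem : v ∈ s.toFinset := Multiset.mem_toFinset.2 hv
  have hc : 1 ≤ s.count v := Multiset.one_le_count_iff_mem.2 hv
  rw [pfac, ← Finset.mul_prod_erase _ _ hvmem, h1, ← Finset.mul_prod_erase _ _ hvmem]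
  have hprod : ∏ w ∈ s.toFinset.erase v, (s.count w).factorial
      = ∏ w ∈ s.toFinset.erase v, ((s.erase v).count w).factorial := by
    refine Finset.prod_congr rfl fun w hw => ?_
    rw [Multiset.count_erase_of_ne (Finset.ne_of_mem_erase hw)]
  rw [hprod, Multiset.count_erase_self]
  obtain ⟨c, hc'⟩ : ∃ c, s.count v = c + 1 := ⟨s.count v - 1, (Nat.succ_pred_eq_of_pos hc).symm⟩
  rw [hc']
  simp [Nat.factorial_succ, mul_assoc]

lemma map_univ_succ {n : ℕ} (f : Fin (n + 1) → ℕ) :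
    Multiset.map f Finset.univ.val = f 0 ::ₘ Multiset.map (f ∘ Fin.succ) Finset.univ.val := by
  rw [Fin.univ_succ, Finset.cons_val, Multiset.map_cons, Finset.map_val, Multiset.map_map]
  rfl

lemma apply_mem {n : ℕ} {s : Multiset ℕ} {f : Fin n → ℕ}
    (hf : Multiset.map f Finset.univ.val = s) (i : Fin n) : f i ∈ s := by
  subst hf
  exact Multiset.mem_map_of_mem _ (by simp)

lemma tail_eq {n : ℕ} {s : Multiset ℕ} {f : Fin (n + 1) → ℕ}
    (hf : Multiset.map f Finset.univ.val = s) :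
    Multiset.map (f ∘ Fin.succ) Finset.univ.val = s.erase (f 0) := by
  subst hf
  rw [map_univ_succ, Multiset.erase_cons_head]

instance finiteFiber (n : ℕ) (s : Multiset ℕ) :
    Finite {f : Fin n → ℕ // Multiset.map f Finset.univ.val = s} := by
  refine Finite.of_injective
    (fun f => (fun i => (⟨f.1 i, Multiset.mem_toFinset.2 (apply_mem f.2 i)⟩ :
      {x // x ∈ s.toFinset}))) ?_
  intro f g h
  ext i
  exact congrArg Subtype.val (congrFun h i)

lemma natcard_sigma (s : Finset ℕ) (T : ℕ → Type) [∀ v, Finite (T v)] :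
    Nat.card (Σ v : s, T v) = ∑ v ∈ s, Nat.card (T v) := by
  letI : ∀ v : ℕ, Fintype (T v) := fun v => Fintype.ofFinite _
  rw [Nat.card_eq_fintype_card, Fintype.card_sigma, ← Finset.sum_coe_sort s]
  simp [Nat.card_eq_fintype_card]

/-- decomposition equiv -/
def succEquiv (n : ℕ) (s : Multiset ℕ) :
    {f : Fin (n+1) → ℕ // Multiset.map f Finset.univ.val = s} ≃
      Σ v : s.toFinset, {g : Fin n → ℕ // Multiset.map g Finset.univ.val = s.erase v.1} where
  toFun f := ⟨⟨f.1 0, Multiset.mem_toFinset.2 (apply_mem f.2 0)⟩,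
    ⟨f.1 ∘ Fin.succ, tail_eq f.2⟩⟩
  invFun x := ⟨Fin.cases x.1.1 x.2.1, by
    have hs : (Fin.cases x.1.1 x.2.1 : Fin (n+1) → ℕ) ∘ Fin.succ = x.2.1 := by
      ext j; simp
    rw [map_univ_succ, hs, Fin.cases_zero, x.2.2,
      Multiset.cons_erase (Multiset.mem_toFinset.1 x.1.2)]⟩
  left_inv f := by
    ext i
    refine Fin.cases rfl (fun j => rfl) i
  right_inv x := by
    refine Sigma.ext rfl ?_
    simp only [heq_eq_eq]
    apply heq_of_eq
    ext j
    rfl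

lemma card_mul_pfac : ∀ (n : ℕ) (s : Multiset ℕ), Multiset.card s = n →
    Nat.card {f : Fin n → ℕ // Multiset.map f Finset.univ.val = s} * pfac s
      = n.factorial := by
  intro n
  induction n with
  | zero =>
    intro s hs
    rw [Multiset.card_eq_zero] at hs
    subst hs
    have h1 : Nat.card {f : Fin 0 → ℕ // Multiset.map f Finset.univ.val = 0} = 1 := by
      rw [Nat.card_eq_one_iff_unique]
      constructor
      · constructor
        intro f g
        ext i
        exact i.elim0
      · exact ⟨⟨fun i => i.elim0, by simp⟩⟩
    simp [h1, pfac]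
  | succ n ih =>
    intro s hs
    have hcard : Nat.card {f : Fin (n+1) → ℕ // Multiset.map f Finset.univ.val = s}
        = ∑ v ∈ s.toFinset,
            Nat.card {g : Fin n → ℕ // Multiset.map g Finset.univ.val = s.erase v} := by
      rw [Nat.card_congr (succEquiv n s),
        natcard_sigma s.toFinset
          (fun v => {g : Fin n → ℕ // Multiset.map g Finset.univ.val = s.erase v})]
    rw [hcard, Finset.sum_mul]
    have hterm : ∀ v ∈ s.toFinset,
        Nat.card {g : Fin n → ℕ // Multiset.map g Finset.univ.val = s.erase v} * pfac s
          = s.count v * n.factorial := by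
      intro v hv
      have hvs : v ∈ s := Multiset.mem_toFinset.1 hv
      rw [pfac_erase hvs, ← mul_assoc, mul_comm _ (s.count v), mul_assoc,
        ih (s.erase v) (by rw [Multiset.card_erase_of_mem hvs, hs]; rfl)]
    rw [Finset.sum_congr rfl hterm, ← Finset.sum_mul, Multiset.toFinset_sum_count_eq, hs,
      Nat.factorial_succ]




lemma prod_multMultiset_fact (s : Multiset ℕ) :
    ((multMultiset s).map Nat.factorial).prod = pfac s := by
  rw [multMultiset, Multiset.map_map, pfac, Finset.prod_eq_multiset_prod, Multiset.toFinset_val]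
  rfl

lemma multMultiset_pos (s : Multiset ℕ) : ∀ x ∈ multMultiset s, x ≠ 0 := by
  intro x hx
  rw [multMultiset] at hx
  obtain ⟨v, hv, rfl⟩ := Multiset.mem_map.1 hx
  exact (Multiset.count_pos.2 (Multiset.mem_dedup.1 hv)).ne'

/-- the padded multiset of a partition -/
def padded (n : ℕ) {k : ℕ} (ν : Nat.Partition k) : Multiset ℕ :=
  ν.parts + Multiset.replicate (n - ν.parts.card) 0

lemma card_padded {n k : ℕ} (ν : Nat.Partition k) (hν : ν.parts.card ≤ n) :
    Multiset.card (padded n ν) = n := by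
  rw [padded, Multiset.card_add, Multiset.card_replicate]
  omega

lemma zero_not_mem_parts {k : ℕ} (ν : Nat.Partition k) : 0 ∉ ν.parts := by
  intro h
  exact absurd (ν.parts_pos h) (lt_irrefl 0)

lemma pfac_padded {n k : ℕ} (ν : Nat.Partition k) :
    pfac (padded n ν) = (n - ν.parts.card).factorial * pfac ν.parts := by
  set c := n - ν.parts.card with hc
  rcases Nat.eq_zero_or_pos c with h0 | hpos
  · rw [padded, ← hc, h0, Multiset.replicate_zero, add_zero, Nat.factorial_zero, one_mul]
  · have h0mem : (0:ℕ) ∉ ν.parts.toFinset := fun h =>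
      zero_not_mem_parts ν (Multiset.mem_toFinset.1 h)
    have htf : (padded n ν).toFinset = insert 0 ν.parts.toFinset := by
      rw [padded, Multiset.toFinset_add, Multiset.toFinset_replicate,
        if_neg hpos.ne', Finset.union_comm, ← Finset.insert_eq]
    rw [pfac, htf, Finset.prod_insert h0mem]
    have hcnt0 : (padded n ν).count 0 = c := by
      rw [padded, Multiset.count_add, Multiset.count_replicate, if_pos rfl,
        Multiset.count_eq_zero.2 (zero_not_mem_parts ν), zero_add]
    have hcnt : ∀ v ∈ ν.parts.toFinset, (padded n ν).count v = ν.parts.count v := by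
      intro v hv
      have hv0 : v ≠ 0 := fun h => h0mem (h ▸ hv)
      rw [padded, Multiset.count_add, Multiset.count_replicate, if_neg (fun h => hv0 h.symm),
        add_zero]
    rw [hcnt0, Finset.prod_congr rfl (fun v hv => by rw [hcnt v hv])]
    rfl

lemma prod_phi_fact {n k : ℕ} (ν : Nat.Partition k) :
    ((phiMultiset n ν).map Nat.factorial).prod = pfac (padded n ν) := by
  rw [phiMultiset, Multiset.filter_add,
    Multiset.filter_eq_self.2 (multMultiset_pos ν.parts), pfac_padded]
  rcases Nat.eq_zero_or_pos (n - ν.parts.card) with h0 | hpos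
  · rw [h0]
    simp [prod_multMultiset_fact, Multiset.filter_singleton]
  · have : Multiset.filter (fun x => x ≠ 0) ({n - ν.parts.card} : Multiset ℕ)
        = {n - ν.parts.card} := by
      rw [Multiset.filter_eq_self]
      intro a ha
      rw [Multiset.mem_singleton] at ha
      subst ha
      exact hpos.ne'
    rw [this, Multiset.map_add, Multiset.prod_add]
    simp [prod_multMultiset_fact, mul_comm]

/-- partition attached to a multiset over `Fin n` -/
def partOf {n k : ℕ} (m : Sym (Fin n) k) : Nat.Partition k where
  parts := m.1.dedup.map m.1.count
  parts_pos := by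
    intro i hi
    obtain ⟨v, hv, rfl⟩ := Multiset.mem_map.1 hi
    exact Multiset.count_pos.2 (Multiset.mem_dedup.1 hv)
  parts_sum := by
    have h1 : (Multiset.map m.1.count m.1.dedup).sum = ∑ v ∈ m.1.toFinset, m.1.count v := by
      rw [Finset.sum_eq_multiset_sum, Multiset.toFinset_val]
    rw [h1, Multiset.toFinset_sum_count_eq, m.2]

def Psi (n k : ℕ) (m : Sym (Fin n) k) : {ν : Nat.Partition k // ν.parts.card ≤ n} :=
  ⟨partOf m, by
    have : (partOf m).parts.card = m.1.toFinset.card := by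
      rw [partOf, Multiset.card_map, ← Multiset.toFinset_val]
      rfl
    rw [this]
    exact le_trans (Finset.card_le_univ _) (by simp)⟩

noncomputable def countEquiv (n : ℕ) : Multiset (Fin n) ≃ (Fin n → ℕ) :=
  Multiset.toFinsupp.toEquiv.trans Finsupp.equivFunOnFinite

lemma countEquiv_apply {n : ℕ} (m : Multiset (Fin n)) (i : Fin n) :
    countEquiv n m i = m.count i := by
  simp [countEquiv]

lemma dedup_count_eq {n : ℕ} (m : Multiset (Fin n)) :
    Multiset.map m.count m.dedup
      = (Multiset.map (countEquiv n m) Finset.univ.val).filter (fun x => x ≠ 0) := by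
  have he : (countEquiv n m : Fin n → ℕ) = m.count := funext fun i => countEquiv_apply m i
  rw [he, Multiset.filter_map]
  congr 1
  rw [Multiset.Nodup.ext (Multiset.nodup_dedup m)
    (Multiset.Nodup.filter _ Finset.univ.nodup)]
  intro i
  simp only [Multiset.mem_dedup, Multiset.mem_filter, Function.comp_apply]
  constructor
  · intro h
    exact ⟨Finset.mem_univ_val _, (Multiset.count_pos.2 h).ne'⟩
  · intro h
    exact Multiset.count_pos.1 (Nat.pos_of_ne_zero h.2)

lemma filter_eq_iff_padded {n k : ℕ} {ν : Nat.Partition k} (hν : ν.parts.card ≤ n)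
    (f : Fin n → ℕ) :
    (Multiset.map f Finset.univ.val).filter (fun x => x ≠ 0) = ν.parts ↔
      Multiset.map f Finset.univ.val = padded n ν := by
  set M := Multiset.map f Finset.univ.val with hM
  have hcardM : Multiset.card M = n := by
    rw [hM, Multiset.card_map]
    simp
  constructor
  · intro h
    have hsplit := Multiset.filter_add_not (fun x => x ≠ 0) M
    have hzeros : M.filter (fun x => ¬ x ≠ 0) = Multiset.replicate (n - ν.parts.card) 0 := by
      rw [Multiset.eq_replicate]
      constructor
      · have := congrArg Multiset.card hsplit
        rw [Multiset.card_add, h, hcardM] at this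
        omega
      · intro b hb
        have := (Multiset.mem_filter.1 hb).2
        push_neg at this
        exact this
    rw [padded, ← hzeros, ← h, hsplit]
  · intro h
    rw [h, padded, Multiset.filter_add, Multiset.filter_eq_self.2
      (fun a ha => (ν.parts_pos ha).ne'),
      Multiset.filter_eq_nil.2 (fun a ha => by
        rw [Multiset.eq_of_mem_replicate ha]; exact fun hh => hh rfl), add_zero]

/-- the fiber equiv -/
noncomputable def fiberEquiv (n k : ℕ) (ν : {ν : Nat.Partition k // ν.parts.card ≤ n}) :
    {m : Sym (Fin n) k // Psi n k m = ν} ≃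
      {f : Fin n → ℕ // Multiset.map f Finset.univ.val = padded n ν.1} := by
  refine Equiv.trans (Equiv.trans ?_ (Equiv.subtypeEquiv (countEquiv n) (fun m =>
    (by rw [← dedup_count_eq] :
      (Multiset.map (countEquiv n m) Finset.univ.val).filter (fun x => x ≠ 0) = ν.1.parts
        ↔ Multiset.map m.count m.dedup = ν.1.parts).symm)))
    (Equiv.subtypeEquivRight (fun f => filter_eq_iff_padded ν.2 f))
  -- {m : Sym // Psi m = ν} ≃ {m : Multiset (Fin n) // map count dedup = ν.1.parts}
  refine ⟨fun x => ⟨x.1.1, ?_⟩, fun y => ⟨⟨y.1, ?_⟩, ?_⟩, ?_, ?_⟩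
  · have := congrArg (fun z => z.1.parts) x.2
    exact this
  · have hs := congrArg Multiset.sum y.2
    calc Multiset.card y.1 = ∑ v ∈ y.1.toFinset, Multiset.count v y.1 :=
          (Multiset.toFinset_sum_count_eq y.1).symm
      _ = (Multiset.map y.1.count y.1.dedup).sum := by
          rw [Finset.sum_eq_multiset_sum, Multiset.toFinset_val]
      _ = ν.1.parts.sum := hs
      _ = k := ν.1.parts_sum
  · exact Subtype.ext (Nat.Partition.ext y.2)
  · intro x
    ext
    rfl
  · intro y
    rfl


lemma natcard_sigma' {ι : Type} [Fintype ι] (T : ι → Type) [∀ i, Finite (T i)] :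
    Nat.card (Σ i, T i) = ∑ i, Nat.card (T i) := by
  letI : ∀ i, Fintype (T i) := fun i => Fintype.ofFinite _
  rw [Nat.card_eq_fintype_card, Fintype.card_sigma]
  simp [Nat.card_eq_fintype_card]

theorem stmt2 (n k : ℕ) (hn : 1 ≤ n) (hk : 1 ≤ k) :
    Nat.choose (n + k - 1) k =
      ∑ ν : {ν : Nat.Partition k // ν.parts.card ≤ n},
        Nat.factorial n / ((phiMultiset n ν.1).map Nat.factorial).prod := by
  have h1 : (n + k - 1).choose k = Nat.card (Sym (Fin n) k) := by
    rw [Nat.card_eq_fintype_card, Sym.card_sym_eq_choose, Fintype.card_fin]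
  rw [h1, Nat.card_congr (Equiv.sigmaFiberEquiv (Psi n k)).symm,
    natcard_sigma' (fun ν => {m : Sym (Fin n) k // Psi n k m = ν})]
  refine Finset.sum_congr rfl fun ν _ => ?_
  rw [Nat.card_congr (fiberEquiv n k ν), prod_phi_fact]
  exact (Nat.div_eq_of_eq_mul_left (pfac_pos _)
    (card_mul_pfac n (padded n ν.1) (card_padded ν.1 ν.2)).symm).symm

end SP
end

section
/- Let k ≥ 1 and n ≥ 2k, and let S_n act diagonally on ordered pairs (A,B) of size-k multisets with elements in {1,…,n}. The map sending (A,B) to the multiset of pairs (m_A(i), m_B(i)), taken over those i ∈ {1,…,n} with (m_A(i), m_B(i)) ≠ (0,0), where m_A(i) denotes the multiplicity of i in A, induces a bijection from the set of S_n-orbits of such pairs onto the set BiPar_k of bipartite partitions of k. -/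
open Equiv

namespace SP

/-- The action of `Perm (Fin n)` on size-`k` multisets over `Fin n`. -/
instance symAction (n k : ℕ) : MulAction (Equiv.Perm (Fin n)) (Sym (Fin n) k) where
  smul σ s := ⟨s.1.map σ, by rw [Multiset.card_map]; exact s.2⟩
  one_smul s := Subtype.ext (by show s.1.map _ = s.1; simp)
  mul_smul σ τ s := Subtype.ext (by
    show s.1.map _ = (s.1.map _).map _
    simp [Multiset.map_map, Function.comp_def])

/-- `b` is a bipartite partition of `k`: a multiset of pairs of nonnegative integers,
none equal to `(0,0)`, whose first coordinates sum to `k` and whose second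
coordinates sum to `k`. -/
def IsBiPar (k : ℕ) (b : Multiset (ℕ × ℕ)) : Prop :=
  (0, 0) ∉ b ∧ (b.map Prod.fst).sum = k ∧ (b.map Prod.snd).sum = k

/-- The multiset of pairs of multiplicities `(m_A(i), m_B(i))`, over those
`i ∈ {1,…,n}` for which this pair is nonzero. -/
def pairToBiPar (n k : ℕ) (A B : Sym (Fin n) k) : Multiset (ℕ × ℕ) :=
  ((Finset.univ : Finset (Fin n)).val.map fun i => (A.1.count i, B.1.count i)).filter
    fun p => p ≠ (0, 0)

/-- the full count-multiset -/
def ctm (n k : ℕ) (p : Sym (Fin n) k × Sym (Fin n) k) : Multiset (ℕ × ℕ) :=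
  (Finset.univ : Finset (Fin n)).val.map fun i => (p.1.1.count i, p.2.1.count i)

lemma pairToBiPar_eq (n k : ℕ) (p : Sym (Fin n) k × Sym (Fin n) k) :
    pairToBiPar n k p.1 p.2 = (ctm n k p).filter fun q => q ≠ (0, 0) := rfl

lemma filter_sum_fst (m : Multiset (ℕ × ℕ)) :
    ((m.filter fun q => q ≠ (0, 0)).map Prod.fst).sum = (m.map Prod.fst).sum := by
  conv_rhs => rw [← Multiset.filter_add_not (fun q => q ≠ (0, 0)) m]
  rw [Multiset.map_add, Multiset.sum_add]
  have : ((m.filter fun q => ¬q ≠ (0, 0)).map Prod.fst).sum = 0 := by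
    apply Multiset.sum_eq_zero
    intro x hx
    obtain ⟨q, hq, rfl⟩ := Multiset.mem_map.mp hx
    have := (Multiset.mem_filter.mp hq).2
    simp only [ne_eq, not_not] at this
    simp [this]
  omega

lemma filter_sum_snd (m : Multiset (ℕ × ℕ)) :
    ((m.filter fun q => q ≠ (0, 0)).map Prod.snd).sum = (m.map Prod.snd).sum := by
  conv_rhs => rw [← Multiset.filter_add_not (fun q => q ≠ (0, 0)) m]
  rw [Multiset.map_add, Multiset.sum_add]
  have : ((m.filter fun q => ¬q ≠ (0, 0)).map Prod.snd).sum = 0 := by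
    apply Multiset.sum_eq_zero
    intro x hx
    obtain ⟨q, hq, rfl⟩ := Multiset.mem_map.mp hx
    have := (Multiset.mem_filter.mp hq).2
    simp only [ne_eq, not_not] at this
    simp [this]
  omega

lemma sum_count_univ {n : ℕ} (s : Multiset (Fin n)) :
    ((Finset.univ : Finset (Fin n)).val.map fun i => s.count i).sum = Multiset.card s := by
  have := Multiset.sum_count_eq_card (s := (Finset.univ : Finset (Fin n))) (m := s)
    (fun a _ => Finset.mem_univ a)
  simpa [Finset.sum] using this

lemma isBiPar_pairToBiPar (n k : ℕ) (p : Sym (Fin n) k × Sym (Fin n) k) :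
    IsBiPar k (pairToBiPar n k p.1 p.2) := by
  refine ⟨fun h => (Multiset.mem_filter.mp h).2 rfl, ?_, ?_⟩
  · rw [pairToBiPar_eq, filter_sum_fst, ctm, Multiset.map_map]
    have : (Prod.fst ∘ fun i => (p.1.1.count i, p.2.1.count i)) = fun i => p.1.1.count i := rfl
    rw [this, sum_count_univ]
    exact p.1.2
  · rw [pairToBiPar_eq, filter_sum_snd, ctm, Multiset.map_map]
    have : (Prod.snd ∘ fun i => (p.1.1.count i, p.2.1.count i)) = fun i => p.2.1.count i := rfl
    rw [this, sum_count_univ]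
    exact p.2.2

lemma count_smul {n k : ℕ} (σ : Equiv.Perm (Fin n)) (A : Sym (Fin n) k) (i : Fin n) :
    (σ • A).1.count i = A.1.count (σ⁻¹ i) := by
  have : (σ • A).1 = A.1.map σ := rfl
  rw [this]
  have := Multiset.count_map_eq_count' (⇑σ) A.1 σ.injective (σ⁻¹ i)
  simpa using this

lemma ctm_smul {n k : ℕ} (σ : Equiv.Perm (Fin n)) (p : Sym (Fin n) k × Sym (Fin n) k) :
    ctm n k (σ • p) = ctm n k p := by
  unfold ctm
  have h1 : (σ • p).1 = σ • p.1 := rfl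
  have h2 : (σ • p).2 = σ • p.2 := rfl
  rw [h1, h2]
  have heq : (fun i => ((σ • p.1).1.count i, (σ • p.2).1.count i))
      = (fun i => (p.1.1.count i, p.2.1.count i)) ∘ ⇑σ⁻¹ := by
    funext i
    show ((σ • p.1).1.count i, (σ • p.2).1.count i)
      = (p.1.1.count (σ⁻¹ i), p.2.1.count (σ⁻¹ i))
    rw [count_smul, count_smul]
  have hu : Finset.univ.val.map ⇑σ⁻¹ = Finset.univ.val := by
    simpa using congrArg Finset.val (Finset.map_univ_equiv σ⁻¹)
  rw [heq, ← Multiset.map_map, hu]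

lemma exists_perm_comp {α : Type*} [LinearOrder α] {n : ℕ} {f g : Fin n → α}
    (h : (Multiset.map f (Finset.univ : Finset (Fin n)).val) = Multiset.map g Finset.univ.val) :
    ∃ σ : Equiv.Perm (Fin n), f ∘ ⇑σ = g := by
  have hp : (List.ofFn f).Perm (List.ofFn g) := by
    rw [← Multiset.coe_eq_coe, ← Fin.univ_val_map, ← Fin.univ_val_map]; exact h
  have h1 : List.ofFn (f ∘ ⇑(Tuple.sort f)) = List.ofFn (g ∘ ⇑(Tuple.sort g)) :=
    List.Perm.eq_of_sortedLE
      (List.sortedLE_ofFn_iff.mpr (Tuple.monotone_sort f))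
      (List.sortedLE_ofFn_iff.mpr (Tuple.monotone_sort g))
      (((Tuple.sort f).ofFn_comp_perm f).trans (hp.trans ((Tuple.sort g).ofFn_comp_perm g).symm))
  have h2 : f ∘ ⇑(Tuple.sort f) = g ∘ ⇑(Tuple.sort g) := List.ofFn_inj.mp h1
  refine ⟨Tuple.sort f * (Tuple.sort g)⁻¹, funext fun i => ?_⟩
  have := congrFun h2 ((Tuple.sort g)⁻¹ i)
  simpa using this

def toBP (n k : ℕ) (p : Sym (Fin n) k × Sym (Fin n) k) : {b : Multiset (ℕ × ℕ) // IsBiPar k b} :=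
  ⟨pairToBiPar n k p.1 p.2, isBiPar_pairToBiPar n k p⟩

lemma toBP_smul (n k : ℕ) (σ : Equiv.Perm (Fin n)) (p : Sym (Fin n) k × Sym (Fin n) k) :
    toBP n k (σ • p) = toBP n k p := Subtype.ext (by
  show pairToBiPar n k (σ • p).1 (σ • p).2 = pairToBiPar n k p.1 p.2
  rw [pairToBiPar_eq, pairToBiPar_eq, ctm_smul])

lemma ctm_eq_of_filter_eq {n k : ℕ} {p q : Sym (Fin n) k × Sym (Fin n) k}
    (h : (ctm n k p).filter (fun x => x ≠ (0, 0)) = (ctm n k q).filter (fun x => x ≠ (0, 0))) :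
    ctm n k p = ctm n k q := by
  have hrep : ∀ m : Multiset (ℕ × ℕ), Multiset.card m = n →
      m.filter (fun x => ¬x ≠ (0, 0)) =
        Multiset.replicate (n - Multiset.card (m.filter fun x => x ≠ (0, 0))) (0, 0) := by
    intro m hm
    apply Multiset.eq_replicate.mpr
    constructor
    · have := congrArg Multiset.card (Multiset.filter_add_not (fun x => x ≠ (0, 0)) m)
      rw [Multiset.card_add, hm] at this
      omega
    · intro b hb
      have := (Multiset.mem_filter.mp hb).2
      simpa using this
  have cardp : Multiset.card (ctm n k p) = n := by simp [ctm]
  have cardq : Multiset.card (ctm n k q) = n := by simp [ctm]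
  conv_lhs => rw [← Multiset.filter_add_not (fun x => x ≠ (0, 0)) (ctm n k p)]
  conv_rhs => rw [← Multiset.filter_add_not (fun x => x ≠ (0, 0)) (ctm n k q)]
  rw [hrep _ cardp, hrep _ cardq, h]

lemma surj (n k : ℕ) (hn : 2 * k ≤ n) (b : Multiset (ℕ × ℕ)) (hb : IsBiPar k b) :
    ∃ p : Sym (Fin n) k × Sym (Fin n) k, pairToBiPar n k p.1 p.2 = b := by
  obtain ⟨hb0, hb1, hb2⟩ := hb
  -- card bound
  have hcard : Multiset.card b ≤ n := by
    have h1 : (b.map fun _ => 1).sum ≤ (b.map fun q => q.1 + q.2).sum := by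
      apply Multiset.sum_map_le_sum_map
      intro q hq
      rcases Nat.eq_zero_or_pos (q.1 + q.2) with h0 | h1
      · exfalso
        have hq0 : q = (0, 0) := Prod.ext (by omega) (by omega)
        exact hb0 (hq0 ▸ hq)
      · omega
    have h2 : (b.map fun q => q.1 + q.2).sum = (b.map Prod.fst).sum + (b.map Prod.snd).sum := by
      rw [← Multiset.sum_map_add]
    have h3 : (b.map fun _ => 1).sum = Multiset.card b := by
      simp
    omega
  set m : Multiset (ℕ × ℕ) := b + Multiset.replicate (n - Multiset.card b) (0, 0) with hmdef
  have hm : Multiset.card m = n := by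
    simp only [hmdef, Multiset.card_add, Multiset.card_replicate]
    omega
  have hl : m.toList.length = n := by rw [Multiset.length_toList]; exact hm
  set f : Fin n → ℕ × ℕ := fun i => m.toList.get (Fin.cast hl.symm i) with hfdef
  have hf : Multiset.map f (Finset.univ : Finset (Fin n)).val = m := by
    rw [Fin.univ_val_map]
    have : List.ofFn f = m.toList := by
      rw [hfdef]
      exact (List.ofFn_congr hl m.toList.get).symm.trans (List.ofFn_get _)
    rw [this, Multiset.coe_toList]
  -- build the multisets
  set MA : Multiset (Fin n) := Finset.univ.val.bind fun i => Multiset.replicate (f i).1 i with hMA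
  set MB : Multiset (Fin n) := Finset.univ.val.bind fun i => Multiset.replicate (f i).2 i with hMB
  have countA : ∀ j, MA.count j = (f j).1 := by
    intro j
    rw [hMA, Multiset.count_bind]
    have : ∀ i : Fin n, (Multiset.replicate (f i).1 i).count j = if j = i then (f i).1 else 0 := by
      intro i; rw [Multiset.count_replicate]
      rcases eq_or_ne j i with h | h
      · simp [h]
      · simp [h, Ne.symm h]
    simp only [this]
    have : ((Finset.univ : Finset (Fin n)).val.map fun i => if j = i then (f i).1 else 0).sum
        = ∑ i : Fin n, if j = i then (f i).1 else 0 := rfl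
    rw [this, Finset.sum_ite_eq]
    simp
  have countB : ∀ j, MB.count j = (f j).2 := by
    intro j
    rw [hMB, Multiset.count_bind]
    have : ∀ i : Fin n, (Multiset.replicate (f i).2 i).count j = if j = i then (f i).2 else 0 := by
      intro i; rw [Multiset.count_replicate]
      rcases eq_or_ne j i with h | h
      · simp [h]
      · simp [h, Ne.symm h]
    simp only [this]
    have : ((Finset.univ : Finset (Fin n)).val.map fun i => if j = i then (f i).2 else 0).sum
        = ∑ i : Fin n, if j = i then (f i).2 else 0 := rfl
    rw [this, Finset.sum_ite_eq]
    simp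
  have sum_fst : ((Finset.univ : Finset (Fin n)).val.map fun i => (f i).1).sum = k := by
    have : ((Finset.univ : Finset (Fin n)).val.map fun i => (f i).1)
        = (Multiset.map f Finset.univ.val).map Prod.fst := by
      rw [Multiset.map_map]; rfl
    rw [this, hf, hmdef, Multiset.map_add, Multiset.sum_add, hb1, Multiset.map_replicate,
      Multiset.sum_replicate]
    simp
  have sum_snd : ((Finset.univ : Finset (Fin n)).val.map fun i => (f i).2).sum = k := by
    have : ((Finset.univ : Finset (Fin n)).val.map fun i => (f i).2)
        = (Multiset.map f Finset.univ.val).map Prod.snd := by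
      rw [Multiset.map_map]; rfl
    rw [this, hf, hmdef, Multiset.map_add, Multiset.sum_add, hb2, Multiset.map_replicate,
      Multiset.sum_replicate]
    simp
  have cardA : Multiset.card MA = k := by
    rw [hMA, Multiset.card_bind]
    simp only [Function.comp_def, Multiset.card_replicate]
    exact sum_fst
  have cardB : Multiset.card MB = k := by
    rw [hMB, Multiset.card_bind]
    simp only [Function.comp_def, Multiset.card_replicate]
    exact sum_snd
  refine ⟨(⟨MA, cardA⟩, ⟨MB, cardB⟩), ?_⟩
  rw [pairToBiPar_eq]
  have hctm : ctm n k (⟨MA, cardA⟩, ⟨MB, cardB⟩) = m := by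
    rw [← hf]
    unfold ctm
    congr 1
    funext i
    exact Prod.ext (countA i) (countB i)
  rw [hctm, hmdef, Multiset.filter_add]
  have e1 : Multiset.filter (fun q => q ≠ (0, 0)) b = b :=
    Multiset.filter_eq_self.mpr (by intro a ha h0; exact hb0 (h0 ▸ ha))
  have e2 : Multiset.filter (fun q => q ≠ (0, 0))
      (Multiset.replicate (n - Multiset.card b) ((0, 0) : ℕ × ℕ)) = 0 :=
    Multiset.filter_eq_nil.mpr (by
      intro a ha
      have := Multiset.eq_of_mem_replicate ha
      simp [this])
  rw [e1, e2, add_zero]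


theorem stmt6 (n k : ℕ) (hk : 1 ≤ k) (hn : 2 * k ≤ n) :
    ∃ e : Quotient (MulAction.orbitRel (Equiv.Perm (Fin n)) (Sym (Fin n) k × Sym (Fin n) k)) ≃
        {b : Multiset (ℕ × ℕ) // IsBiPar k b},
      ∀ p : Sym (Fin n) k × Sym (Fin n) k,
        (e (Quotient.mk (MulAction.orbitRel (Equiv.Perm (Fin n))
              (Sym (Fin n) k × Sym (Fin n) k)) p)).1 = pairToBiPar n k p.1 p.2 := by
  classical
  let F : Quotient (MulAction.orbitRel (Equiv.Perm (Fin n)) (Sym (Fin n) k × Sym (Fin n) k)) →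
      {b : Multiset (ℕ × ℕ) // IsBiPar k b} :=
    Quotient.lift (toBP n k) (by
      intro a b hab
      obtain ⟨σ, hσ⟩ := hab
      rw [← hσ, toBP_smul])
  have hinj : Function.Injective F := by
    intro x y hxy
    obtain ⟨p, rfl⟩ := Quotient.exists_rep x
    obtain ⟨q, rfl⟩ := Quotient.exists_rep y
    have hf : pairToBiPar n k p.1 p.2 = pairToBiPar n k q.1 q.2 := congrArg Subtype.val hxy
    rw [pairToBiPar_eq, pairToBiPar_eq] at hf
    have hm : ctm n k p = ctm n k q := ctm_eq_of_filter_eq hf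
    have hml : Multiset.map ((fun x : ℕ × ℕ => (toLex x : ℕ ×ₗ ℕ)) ∘
          fun i => (p.1.1.count i, p.2.1.count i)) Finset.univ.val
        = Multiset.map ((fun x : ℕ × ℕ => (toLex x : ℕ ×ₗ ℕ)) ∘
          fun i => (q.1.1.count i, q.2.1.count i)) Finset.univ.val := by
      rw [← Multiset.map_map, ← Multiset.map_map]
      exact congrArg _ hm
    obtain ⟨σ, hσ⟩ := exists_perm_comp hml
    have hcnt : ∀ i, (p.1.1.count (σ i), p.2.1.count (σ i)) = (q.1.1.count i, q.2.1.count i) := by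
      intro i
      have := congrFun hσ i
      exact toLex.injective this
    have hpq : σ⁻¹ • p = q := by
      have h1 : σ⁻¹ • p.1 = q.1 := by
        apply Subtype.ext
        apply Multiset.ext.mpr
        intro i
        rw [count_smul]
        rw [inv_inv]
        exact congrArg Prod.fst (hcnt i)
      have h2 : σ⁻¹ • p.2 = q.2 := by
        apply Subtype.ext
        apply Multiset.ext.mpr
        intro i
        rw [count_smul]
        rw [inv_inv]
        exact congrArg Prod.snd (hcnt i)
      exact Prod.ext h1 h2
    exact Quotient.sound ⟨σ, by show σ • q = p; rw [← hpq, smul_inv_smul]⟩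
  have hsurj : Function.Surjective F := by
    intro y
    obtain ⟨p, hp⟩ := surj n k hn y.1 y.2
    exact ⟨Quotient.mk _ p, Subtype.ext hp⟩
  exact ⟨Equiv.ofBijective F ⟨hinj, hsurj⟩, fun p => rfl⟩


end SP
end

section
/- Let k ≥ 0 and let λ = (λ_1,…,λ_ℓ) be a partition of l, where 0 ≤ l ≤ k. Then there exists a partition ν with |ν| ≤ k and exactly l parts such that K_{λ,Ψ(ν)} > 0, if and only if Σ_{i=1}^{ℓ} i·λ_i ≤ k. -/
namespace SP

/-- The Young diagram with row lengths given by the multiset `lam` (sorted decreasingly). -/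
def shapeOf (lam : Multiset ℕ) : YoungDiagram :=
  YoungDiagram.ofRowLens (lam.sort (· ≥ ·)) (List.sortedGE_iff_pairwise.mpr (Multiset.pairwise_sort _ _))

/-- The Kostka number `K_{λ,μ}`: the number of semistandard Young tableaux of shape `λ`
and content `μ`, i.e. in which the value `j` (0-based) occurs exactly `μ_{j+1}` times. -/
noncomputable def kostka (lam mu : Multiset ℕ) : ℕ :=
  Nat.card {T : SemistandardYoungTableau (shapeOf lam) //
    ∀ j : ℕ, ((shapeOf lam).cells.filter fun c => T c.1 c.2 = j).card
      = (mu.sort (· ≥ ·)).getD j 0}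

/-- The statistic `b̄(λ) = Σ_i i·λ_i` (1-based indices, parts in weakly decreasing
order; here `List.enum` provides 0-based indices, whence the shift by one). -/
def bbarStat (lam : Multiset ℕ) : ℕ :=
  ((lam.sort (· ≥ ·)).zipIdx.map fun p => (p.2 + 1) * p.1).sum

def wsum : List ℕ → ℕ
  | [] => 0
  | a :: t => a + t.sum + wsum t

lemma sum_getD (L : List ℕ) : (∑ i ∈ Finset.range L.length, L.getD i 0) = L.sum := by
  induction L with
  | nil => simp
  | cons a t ih =>
    rw [List.length_cons, Finset.sum_range_succ']
    simp only [List.getD_cons_succ, List.getD_cons_zero, ih, List.sum_cons]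
    omega

lemma wsum_eq_range (L : List ℕ) :
    wsum L = ∑ i ∈ Finset.range L.length, (i + 1) * L.getD i 0 := by
  induction L with
  | nil => simp [wsum]
  | cons a t ih =>
    rw [List.length_cons, Finset.sum_range_succ']
    simp only [List.getD_cons_succ, List.getD_cons_zero, wsum]
    have : ∀ i, (i + 1 + 1) * t.getD i 0 = (i + 1) * t.getD i 0 + t.getD i 0 := by
      intro i; ring
    rw [Finset.sum_congr rfl fun i _ => this i, Finset.sum_add_distrib, sum_getD, ← ih]
    omega

lemma enumFrom_wsum (L : List ℕ) (n : ℕ) :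
    ((L.zipIdx n).map fun p => (p.2 + 1) * p.1).sum = n * L.sum + wsum L := by
  induction L generalizing n with
  | nil => simp [wsum]
  | cons a t ih =>
    simp only [List.zipIdx_cons, List.map_cons, List.sum_cons, ih (n+1), wsum, List.sum_cons]
    ring

lemma bbarStat_eq_wsum (m : Multiset ℕ) : bbarStat m = wsum (m.sort (· ≥ ·)) := by
  unfold bbarStat
  simp [enumFrom_wsum]


lemma wsum_max_cons {a : ℕ} {L : List ℕ} (ha : a ∈ L) (hmax : ∀ b ∈ L, b ≤ a) :
    wsum (a :: L.erase a) ≤ wsum L := by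
  induction L with
  | nil => simp at ha
  | cons b t ih =>
    rcases eq_or_ne a b with rfl | hne
    · simp [List.erase_cons_head]
    · have hat : a ∈ t := by
        rcases List.mem_cons.mp ha with h | h
        · exact absurd h hne
        · exact h
      have hba : b ≤ a := hmax b List.mem_cons_self
      have hsum : t.sum = a + (t.erase a).sum := (List.sum_erase hat).symm
      have ihh := ih hat fun c hc => hmax c (List.mem_cons_of_mem b hc)
      rw [List.erase_cons_tail (by simp [Ne.symm hne])]
      simp only [wsum, List.sum_cons] at *
      omega

lemma wsum_perm_le {L1 L2 : List ℕ} (hs : L1.Pairwise (· ≥ ·)) (hp : L1.Perm L2) :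
    wsum L1 ≤ wsum L2 := by
  induction L1 generalizing L2 with
  | nil => rw [← hp.nil_eq]
  | cons a t ih =>
    have ha2 : a ∈ L2 := hp.mem_iff.mp List.mem_cons_self
    have hmax : ∀ b ∈ L2, b ≤ a := by
      intro b hb
      rcases List.mem_cons.mp (hp.mem_iff.mpr hb) with rfl | h
      · exact le_refl _
      · exact List.rel_of_pairwise_cons hs h
    have hperm : t.Perm (L2.erase a) := (List.cons_perm_iff_perm_erase.mp hp).2
    have ih2 := ih hs.of_cons hperm
    have h1 : wsum (a :: L2.erase a) ≤ wsum L2 := wsum_max_cons ha2 hmax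
    have : wsum (a :: t) ≤ wsum (a :: L2.erase a) := by
      simp only [wsum, hperm.sum_eq]
      omega
    omega


lemma bbarStat_coe_le (L : List ℕ) : bbarStat (↑L) ≤ wsum L := by
  rw [bbarStat_eq_wsum]
  exact wsum_perm_le (Multiset.pairwise_sort _ _)
    (Multiset.coe_eq_coe.mp (Multiset.sort_eq _ _))

lemma wsum_map_le (c : ℕ → ℕ) : ∀ (t : ℕ) (D : List ℕ), D.Pairwise (· < ·) →
    (∀ w ∈ D, t < w) →
    t * (D.map c).sum + wsum (D.map c) ≤ (D.map fun w => w * c w).sum := by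
  intro t D
  induction D generalizing t with
  | nil => simp [wsum]
  | cons v D' ih =>
    intro hs hpos
    have h1 : ∀ w ∈ D', t + 1 < w := by
      intro w hw
      have := List.rel_of_pairwise_cons hs hw
      have := hpos v List.mem_cons_self
      omega
    have h2 := ih (t + 1) hs.of_cons h1
    have hv : t + 1 ≤ v := hpos v List.mem_cons_self
    simp only [List.map_cons, List.sum_cons, wsum] at *
    have : (t + 1) * c v ≤ v * c v := Nat.mul_le_mul_right _ hv
    nlinarith

lemma claimA (s : Multiset ℕ) (hs : ∀ x ∈ s, 0 < x) :
    bbarStat (multMultiset s) ≤ s.sum := by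
  classical
  set D : List ℕ := s.dedup.sort (· ≤ ·) with hD
  have hDnodup : D.Nodup := by
    have : (↑D : Multiset ℕ) = s.dedup := Multiset.sort_eq _ _
    rw [← Multiset.coe_nodup, this]
    exact s.nodup_dedup
  have hDsorted : D.Pairwise (· < ·) :=
    ((Multiset.pairwise_sort _ _).and hDnodup).imp fun h => lt_of_le_of_ne h.1 h.2
  have hDpos : ∀ w ∈ D, 0 < w := by
    intro w hw
    apply hs
    rw [← Multiset.mem_dedup, ← Multiset.sort_eq s.dedup (· ≤ ·)]
    exact_mod_cast hw
  have hmm : multMultiset s = ↑(D.map fun v => s.count v) := by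
    rw [multMultiset, ← Multiset.sort_eq s.dedup (· ≤ ·)]
    rfl
  rw [hmm]
  calc bbarStat ↑(D.map fun v => s.count v) ≤ wsum (D.map fun v => s.count v) :=
        bbarStat_coe_le _
    _ ≤ (D.map fun w => w * s.count w).sum := by
        have := wsum_map_le (fun v => s.count v) 0 D hDsorted hDpos
        simpa using this
    _ = s.sum := by
        have : (D.map fun w => w * s.count w).sum
            = ((s.dedup).map fun w => w * s.count w).sum := by
          rw [← Multiset.sort_eq s.dedup (· ≤ ·)]; rfl
        rw [this]
        have h2 := Finset.sum_multiset_map_count s (id : ℕ → ℕ)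
        simp only [smul_eq_mul, id] at h2
        rw [Finset.sum_eq_multiset_sum, Multiset.toFinset_val] at h2
        have h3 : (Multiset.map (fun w => w * Multiset.count w s) s.dedup)
            = Multiset.map (fun x => Multiset.count x s * x) s.dedup := by
          apply Multiset.map_congr rfl
          intro x _; ring
        rw [h3, ← h2]
        simp


lemma mem_shapeOf {m : Multiset ℕ} {c : ℕ × ℕ} :
    c ∈ shapeOf m ↔ c.2 < (m.sort (· ≥ ·)).getD c.1 0 := by
  rw [shapeOf, YoungDiagram.mem_ofRowLens]
  constructor
  · rintro ⟨h, h2⟩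
    rwa [List.getD_eq_getElem _ _ h]
  · intro h
    have hlt : c.1 < (m.sort (· ≥ ·)).length := by
      by_contra hge
      rw [List.getD_eq_default _ _ (le_of_not_gt hge)] at h
      omega
    exact ⟨hlt, by rwa [← List.getD_eq_getElem _ _ hlt]⟩

lemma rowLen_shapeOf (m : Multiset ℕ) (i : ℕ) :
    (shapeOf m).rowLen i = (m.sort (· ≥ ·)).getD i 0 := by
  have h : ∀ j, j < (shapeOf m).rowLen i ↔ j < (m.sort (· ≥ ·)).getD i 0 := by
    intro j
    rw [← YoungDiagram.mem_iff_lt_rowLen, mem_shapeOf]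
  have h1 := h ((shapeOf m).rowLen i)
  have h2 := h ((m.sort (· ≥ ·)).getD i 0)
  omega

lemma fst_lt_of_mem {m : Multiset ℕ} {c : ℕ × ℕ} (h : c ∈ (shapeOf m).cells) :
    c.1 < (m.sort (· ≥ ·)).length := by
  rw [YoungDiagram.mem_cells, mem_shapeOf] at h
  by_contra hge
  rw [List.getD_eq_default _ _ (le_of_not_gt hge)] at h
  omega

lemma le_entry {μ : YoungDiagram} (T : SemistandardYoungTableau μ) :
    ∀ i j, (i, j) ∈ μ → i ≤ T i j := by
  intro i
  induction i with
  | zero => intro j _; exact Nat.zero_le _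
  | succ n ih =>
    intro j h
    have h' : (n, j) ∈ μ := μ.up_left_mem (Nat.le_succ n) (le_refl j) h
    have h1 : T n j < T (n + 1) j := T.col_strict (Nat.lt_succ_self n) h
    have h2 := ih j h'
    omega

lemma bbar_cells_sum (m : Multiset ℕ) :
    bbarStat m = ∑ c ∈ (shapeOf m).cells, (c.1 + 1) := by
  rw [bbarStat_eq_wsum, wsum_eq_range]
  rw [← Finset.sum_fiberwise_of_maps_to (g := Prod.fst)
    (t := Finset.range (m.sort (· ≥ ·)).length) (fun c hc => Finset.mem_range.mpr (fst_lt_of_mem hc))]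
  apply Finset.sum_congr rfl
  intro i _
  have hrow : (shapeOf m).cells.filter (fun c => c.1 = i) = (shapeOf m).row i := rfl
  rw [hrow]
  have : ∑ c ∈ (shapeOf m).row i, (c.1 + 1) = ∑ _c ∈ (shapeOf m).row i, (i + 1) :=
    Finset.sum_congr rfl fun c hc => by rw [(YoungDiagram.mem_row_iff.mp hc).2]
  rw [this, Finset.sum_const, ← YoungDiagram.rowLen_eq_card, rowLen_shapeOf,
    smul_eq_mul, mul_comm]


lemma content_sum {lam mu : Multiset ℕ} (T : SemistandardYoungTableau (shapeOf lam))
    (hT : ∀ j : ℕ, ((shapeOf lam).cells.filter fun c => T c.1 c.2 = j).card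
      = (mu.sort (· ≥ ·)).getD j 0) :
    ∑ c ∈ (shapeOf lam).cells, (T c.1 c.2 + 1) = bbarStat mu := by
  rw [bbarStat_eq_wsum, wsum_eq_range]
  have hmaps : ∀ c ∈ (shapeOf lam).cells,
      T c.1 c.2 ∈ Finset.range (mu.sort (· ≥ ·)).length := by
    intro c hc
    rw [Finset.mem_range]
    by_contra hge
    have h0 := hT (T c.1 c.2)
    rw [List.getD_eq_default _ _ (le_of_not_gt hge)] at h0
    have : c ∈ (shapeOf lam).cells.filter fun c' => T c'.1 c'.2 = T c.1 c.2 :=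
      Finset.mem_filter.mpr ⟨hc, rfl⟩
    have := Finset.card_pos.mpr ⟨c, this⟩
    omega
  rw [← Finset.sum_fiberwise_of_maps_to (g := fun c => T c.1 c.2) hmaps]
  apply Finset.sum_congr rfl
  intro j _
  have : ∑ c ∈ (shapeOf lam).cells.filter (fun c => T c.1 c.2 = j), (T c.1 c.2 + 1)
      = ∑ _c ∈ (shapeOf lam).cells.filter (fun c => T c.1 c.2 = j), (j + 1) :=
    Finset.sum_congr rfl fun c hc => by rw [(Finset.mem_filter.mp hc).2]
  rw [this, Finset.sum_const, hT j, smul_eq_mul, mul_comm]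


lemma map_range_getD (L : List ℕ) :
    (List.range L.length).map (fun i => L.getD i 0) = L := by
  induction L with
  | nil => simp
  | cons a t ih =>
    rw [List.length_cons, List.range_succ_eq_map, List.map_cons, List.map_map]
    simp only [List.getD_cons_zero, Function.comp_def, List.getD_cons_succ]
    rw [ih]

/-- the canonical multiset with mult-multiset equal to `L` -/
def canonNu (L : List ℕ) : Multiset ℕ :=
  ∑ i ∈ Finset.range L.length, Multiset.replicate (L.getD i 0) (i + 1)

lemma card_finsetSum {α : Type*} (s : Finset α) (f : α → Multiset ℕ) :
    Multiset.card (∑ i ∈ s, f i) = ∑ i ∈ s, Multiset.card (f i) := by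
  classical
  induction s using Finset.cons_induction with
  | empty => simp
  | cons a s ha ih => simp [Finset.sum_cons, ih]

lemma msum_finsetSum {α : Type*} (s : Finset α) (f : α → Multiset ℕ) :
    (∑ i ∈ s, f i).sum = ∑ i ∈ s, (f i).sum := by
  classical
  induction s using Finset.cons_induction with
  | empty => simp
  | cons a s ha ih => rw [Finset.sum_cons, Finset.sum_cons, Multiset.sum_add, ih]

lemma canonNu_card (L : List ℕ) : Multiset.card (canonNu L) = L.sum := by
  rw [canonNu, card_finsetSum]
  simp only [Multiset.card_replicate]
  exact sum_getD L

lemma canonNu_sum (L : List ℕ) : (canonNu L).sum = wsum L := by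
  rw [canonNu, msum_finsetSum, wsum_eq_range]
  apply Finset.sum_congr rfl
  intro i _
  rw [Multiset.sum_replicate, smul_eq_mul, mul_comm]

lemma canonNu_count (L : List ℕ) (j : ℕ) (hj : j < L.length) :
    (canonNu L).count (j + 1) = L.getD j 0 := by
  rw [canonNu, Multiset.count_sum']
  rw [Finset.sum_congr rfl (fun i _ => Multiset.count_replicate _ _ _)]
  simp only [add_left_inj]
  rw [Finset.sum_ite_eq' (Finset.range L.length) j (fun i => L.getD i 0)]
  simp [hj]

lemma canonNu_pos (L : List ℕ) : ∀ x ∈ canonNu L, 0 < x := by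
  intro x hx
  rw [canonNu, Multiset.mem_sum] at hx
  obtain ⟨i, _, hi⟩ := hx
  rw [Multiset.eq_of_mem_replicate hi]
  omega

lemma multMultiset_canonNu (L : List ℕ) (hpos : ∀ x ∈ L, 0 < x) :
    multMultiset (canonNu L) = ↑L := by
  have hget : ∀ i, i < L.length → 0 < L.getD i 0 := by
    intro i hi
    apply hpos
    rw [List.getD_eq_getElem _ _ hi]
    exact List.getElem_mem hi
  have hmem : ∀ v, v ∈ canonNu L ↔ ∃ i, i < L.length ∧ v = i + 1 := by
    intro v
    rw [canonNu, Multiset.mem_sum]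
    constructor
    · rintro ⟨i, hi, hv⟩
      exact ⟨i, Finset.mem_range.mp hi, (Multiset.eq_of_mem_replicate hv)⟩
    · rintro ⟨i, hi, rfl⟩
      exact ⟨i, Finset.mem_range.mpr hi,
        Multiset.mem_replicate.mpr ⟨(hget i hi).ne', rfl⟩⟩
  have hded : (canonNu L).dedup = ↑((List.range L.length).map (· + 1)) := by
    rw [Multiset.Nodup.ext (Multiset.nodup_dedup _) ?_]
    · intro a
      rw [Multiset.mem_dedup, hmem]
      simp only [Multiset.mem_coe, List.mem_map, List.mem_range]
      constructor
      · rintro ⟨i, hi, rfl⟩; exact ⟨i, hi, rfl⟩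
      · rintro ⟨i, hi, rfl⟩; exact ⟨i, hi, rfl⟩
    · rw [Multiset.coe_nodup]
      exact List.nodup_range.map (fun a b => by omega)
  rw [multMultiset, hded]
  have : (Multiset.map (fun v => (canonNu L).count v) ↑((List.range L.length).map (· + 1)))
      = ↑(((List.range L.length).map (· + 1)).map fun v => (canonNu L).count v) := rfl
  rw [this, List.map_map]
  have : ((List.range L.length).map ((fun v => (canonNu L).count v) ∘ (· + 1)))
      = (List.range L.length).map (fun i => L.getD i 0) := by
    apply List.map_congr_left
    intro i hi
    exact canonNu_count L i (List.mem_range.mp hi)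
  rw [this, map_range_getD]


/-- the tableau whose row `i` is filled with value `i` -/
def rowTab (m : Multiset ℕ) : SemistandardYoungTableau (shapeOf m) where
  entry i j := if (i, j) ∈ shapeOf m then i else 0
  row_weak' := by
    intro i j1 j2 hj h
    rw [if_pos h, if_pos ((shapeOf m).up_left_mem (le_refl i) (le_of_lt hj) h)]
  col_strict' := by
    intro i1 i2 j hi h
    rw [if_pos h, if_pos ((shapeOf m).up_left_mem (le_of_lt hi) (le_refl j) h)]
    exact hi
  zeros' := by intro i j h; rw [if_neg h]

lemma rowTab_content (m : Multiset ℕ) (j : ℕ) :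
    ((shapeOf m).cells.filter fun c => (rowTab m) c.1 c.2 = j).card
      = (m.sort (· ≥ ·)).getD j 0 := by
  have : ((shapeOf m).cells.filter fun c => (rowTab m) c.1 c.2 = j)
      = (shapeOf m).row j := by
    apply Finset.filter_congr
    intro c hc
    rw [YoungDiagram.mem_cells] at hc
    have : (rowTab m) c.1 c.2 = c.1 := by
      show (if (c.1, c.2) ∈ shapeOf m then c.1 else 0) = c.1
      rw [if_pos hc]
    rw [this]
  rw [this, ← YoungDiagram.rowLen_eq_card, rowLen_shapeOf]

lemma kostka_finite (lam mu : Multiset ℕ) :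
    Finite {T : SemistandardYoungTableau (shapeOf lam) //
      ∀ j : ℕ, ((shapeOf lam).cells.filter fun c => T c.1 c.2 = j).card
        = (mu.sort (· ≥ ·)).getD j 0} := by
  set N := (mu.sort (· ≥ ·)).length with hN
  apply Finite.of_injective (β := (shapeOf lam).cells → Fin N)
    (f := fun T c => ⟨T.1 c.1.1 c.1.2, ?_⟩)
  · intro T1 T2 h
    ext i j
    by_cases hc : (i, j) ∈ shapeOf lam
    · have := congrFun h ⟨(i, j), ((shapeOf lam).mem_cells _).mpr hc⟩
      exact congrArg Fin.val this
    · rw [T1.1.zeros hc, T2.1.zeros hc]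
  · -- bound
    by_contra hge
    have h0 := T.2 (T.1 c.1.1 c.1.2)
    rw [List.getD_eq_default _ _ (le_of_not_gt hge)] at h0
    have hmem : c.1 ∈ (shapeOf lam).cells.filter
        fun c' => T.1 c'.1 c'.2 = T.1 c.1.1 c.1.2 :=
      Finset.mem_filter.mpr ⟨c.2, rfl⟩
    have := Finset.card_pos.mpr ⟨c.1, hmem⟩
    omega

theorem stmt13 (k l : ℕ) (hl : l ≤ k) (lam : Nat.Partition l) :
    (∃ i ≤ k, ∃ ν : Nat.Partition i, ν.parts.card = l ∧
        0 < kostka lam.parts (multMultiset ν.parts)) ↔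
      bbarStat lam.parts ≤ k := by
  constructor
  · rintro ⟨i, hik, ν, hcard, hpos⟩
    have hne : Nonempty {T : SemistandardYoungTableau (shapeOf lam.parts) //
        ∀ j : ℕ, ((shapeOf lam.parts).cells.filter fun c => T c.1 c.2 = j).card
          = ((multMultiset ν.parts).sort (· ≥ ·)).getD j 0} := by
      by_contra hempty
      rw [not_nonempty_iff] at hempty
      rw [kostka, Nat.card_of_isEmpty] at hpos
      omega
    obtain ⟨T, hT⟩ := hne
    calc bbarStat lam.parts = ∑ c ∈ (shapeOf lam.parts).cells, (c.1 + 1) :=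
          bbar_cells_sum _
      _ ≤ ∑ c ∈ (shapeOf lam.parts).cells, (T c.1 c.2 + 1) := by
          apply Finset.sum_le_sum
          intro c hc
          have hcm : (c.1, c.2) ∈ shapeOf lam.parts := by
            rw [Prod.mk.eta]
            exact ((shapeOf lam.parts).mem_cells _).mp hc
          have := le_entry T c.1 c.2 hcm
          omega
      _ = bbarStat (multMultiset ν.parts) := content_sum T hT
      _ ≤ ν.parts.sum := claimA _ (fun _ hx => ν.parts_pos hx)
      _ = i := ν.parts_sum
      _ ≤ k := hik
  · intro h
    set L := lam.parts.sort (· ≥ ·) with hLdef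
    have hLcoe : (↑L : Multiset ℕ) = lam.parts := Multiset.sort_eq _ _
    have hLpos : ∀ x ∈ L, 0 < x := by
      intro x hx
      apply lam.parts_pos
      rw [← hLcoe]
      exact_mod_cast hx
    have hsum : (canonNu L).sum = bbarStat lam.parts := by
      rw [canonNu_sum, bbarStat_eq_wsum]
    refine ⟨bbarStat lam.parts, h,
      ⟨canonNu L, fun hx => canonNu_pos L _ hx, hsum⟩, ?_, ?_⟩
    · show Multiset.card (canonNu L) = l
      rw [canonNu_card]
      have : L.sum = lam.parts.sum := by rw [← hLcoe]; rfl
      rw [this, lam.parts_sum]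
    · show 0 < kostka lam.parts (multMultiset (canonNu L))
      rw [multMultiset_canonNu L hLpos, hLcoe]
      have hfin := kostka_finite lam.parts lam.parts
      have hne : Nonempty {T : SemistandardYoungTableau (shapeOf lam.parts) //
          ∀ j : ℕ, ((shapeOf lam.parts).cells.filter fun c => T c.1 c.2 = j).card
            = (lam.parts.sort (· ≥ ·)).getD j 0} :=
        ⟨rowTab lam.parts, rowTab_content lam.parts⟩
      rw [kostka]
      exact Nat.card_pos

end SP
end

section
/- For every integer n and every partition λ, there exists at most one partition μ such that (λ, μ) is an n-pair. -/
namespace SP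

/-- The length of the `i`-th row (0-based) of the Young diagram of the partition whose
parts form the multiset `lam` (parts listed in weakly decreasing order). -/
def rowLen (lam : Multiset ℕ) (i : ℕ) : ℕ := (lam.sort (· ≥ ·)).getD i 0

/-- `(λ, μ)` is an `n`-pair: `λ` and `μ` are partitions (multisets of positive
integers), the Young diagram of `μ` is obtained from that of `λ` by adding nodes in
exactly one row, and the rightmost added node, in row `i` and column `j`
(both 1-based; matrix convention), has `|λ|`-content `|λ| + j - i = n`. -/
def IsNPair (n : ℤ) (lam mu : Multiset ℕ) : Prop :=
  (∀ x ∈ lam, 0 < x) ∧ (∀ x ∈ mu, 0 < x) ∧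
    ∃ i : ℕ, rowLen lam i < rowLen mu i ∧ (∀ j : ℕ, j ≠ i → rowLen mu j = rowLen lam j) ∧
      (lam.sum : ℤ) + (rowLen mu i : ℤ) - ((i : ℤ) + 1) = n

lemma rowLen_antitone (m : Multiset ℕ) {i j : ℕ} (h : i ≤ j) :
    rowLen m j ≤ rowLen m i := by
  unfold rowLen
  have hs : (m.sort (· ≥ ·)).Pairwise (· ≥ ·) := m.pairwise_sort _
  by_cases hj : j < (m.sort (· ≥ ·)).length
  · have hi : i < (m.sort (· ≥ ·)).length := lt_of_le_of_lt h hj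
    rw [List.getD_eq_getElem _ _ hj, List.getD_eq_getElem _ _ hi]
    rcases eq_or_lt_of_le h with rfl | h'
    · exact le_refl _
    · exact List.Pairwise.rel_get_of_lt hs (by simpa using h')
  · rw [List.getD_eq_default _ _ (le_of_not_gt hj)]
    exact Nat.zero_le _

lemma ext_rowLen {m₁ m₂ : Multiset ℕ} (hp₁ : ∀ x ∈ m₁, 0 < x) (hp₂ : ∀ x ∈ m₂, 0 < x)
    (h : ∀ i, rowLen m₁ i = rowLen m₂ i) : m₁ = m₂ := by
  have e : m₁.sort (· ≥ ·) = m₂.sort (· ≥ ·) := by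
    apply List.ext_getElem?
    intro i
    have hi := h i
    unfold rowLen at hi
    rw [List.getD_eq_getElem?_getD, List.getD_eq_getElem?_getD] at hi
    rcases e₁ : (m₁.sort (· ≥ ·))[i]? with _ | a
    · rcases e₂ : (m₂.sort (· ≥ ·))[i]? with _ | b
      · rfl
      · exfalso
        have hb : b ∈ m₂.sort (· ≥ ·) := List.mem_of_getElem? e₂
        have : 0 < b := hp₂ b (by rwa [Multiset.mem_sort] at hb)
        rw [e₁, e₂] at hi
        simp at hi
        omega
    · rcases e₂ : (m₂.sort (· ≥ ·))[i]? with _ | b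
      · exfalso
        have ha : a ∈ m₁.sort (· ≥ ·) := List.mem_of_getElem? e₁
        have : 0 < a := hp₁ a (by rwa [Multiset.mem_sort] at ha)
        rw [e₁, e₂] at hi
        simp at hi
        omega
      · rw [e₁, e₂] at hi
        simp at hi
        rw [hi]
  calc m₁ = ↑(m₁.sort (· ≥ ·)) := (m₁.sort_eq _).symm
    _ = ↑(m₂.sort (· ≥ ·)) := by rw [e]
    _ = m₂ := m₂.sort_eq _

/-- For every integer `n` and every partition `λ` there is at most one partition `μ`
such that `(λ, μ)` is an `n`-pair. -/
theorem stmt14 (n : ℤ) (lam mu₁ mu₂ : Multiset ℕ)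
    (h₁ : IsNPair n lam mu₁) (h₂ : IsNPair n lam mu₂) : mu₁ = mu₂ := by
  obtain ⟨hl, hm₁, i₁, hlt₁, hoth₁, hc₁⟩ := h₁
  obtain ⟨-, hm₂, i₂, hlt₂, hoth₂, hc₂⟩ := h₂
  have key : ∀ (a b : ℕ) (ma mb : Multiset ℕ),
      rowLen lam a < rowLen ma a → rowLen lam b < rowLen mb b →
      (∀ j : ℕ, j ≠ a → rowLen ma j = rowLen lam j) →
      (lam.sum : ℤ) + (rowLen ma a : ℤ) - ((a : ℤ) + 1) = n →
      (lam.sum : ℤ) + (rowLen mb b : ℤ) - ((b : ℤ) + 1) = n →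
      ¬ (b < a) := by
    intro a b ma mb hla hlb hoa hca hcb hba
    have h1 : rowLen ma b = rowLen lam b := hoa b (by omega)
    have h2 : rowLen ma a ≤ rowLen ma b := rowLen_antitone ma hba.le
    -- rowLen ma a = rowLen mb b + (a - b) > rowLen mb b > rowLen lam b = rowLen ma b
    omega
  have hii : i₁ = i₂ := by
    rcases lt_trichotomy i₁ i₂ with h | h | h
    · exact absurd h (key i₂ i₁ mu₂ mu₁ hlt₂ hlt₁ hoth₂ hc₂ hc₁)
    · exact h
    · exact absurd h (key i₁ i₂ mu₁ mu₂ hlt₁ hlt₂ hoth₁ hc₁ hc₂)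
  subst hii
  have hr : rowLen mu₁ i₁ = rowLen mu₂ i₁ := by omega
  apply ext_rowLen hm₁ hm₂
  intro j
  by_cases hj : j = i₁
  · subst hj; exact hr
  · rw [hoth₁ j hj, hoth₂ j hj]
end SP
end
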